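/- In the PAVG sampler, the mean-parameterized scheme with auxiliary variable z_t = Lᵀs_t + Z (Z ∼ N(0,I)) and the variance-parameterized scheme with auxiliary variable z_t = s_t + (Lᵀ)⁻¹Z produce identical transition kernels from s_t to s_{t+1}: for any s_t and any realization Z, the proposal distributions Q(s*|z_t;s_t), the backward proposal Q(s_t|z_t;s*), and the Metropolis–Hastings acceptance ratios coincide as functions of (s_t, s*, Z). -/
import Mathlib


open Matrix

/-- Equivalence of the mean-parameterized and variance-parameterized PAVG schemes:
with zm = Lᵀs_t + Z and zv = s_t + (Lᵀ)⁻¹Z, the forward proposal energies, the backward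
proposal energies, and the Metropolis–Hastings acceptance ratios coincide. -/
theorem stmt3 {d : ℕ} (S : Finset (Fin d → ℝ))
    (W D L : Matrix (Fin d) (Fin d) ℝ)
    (hW : W.IsSymm) (hD : D.IsDiag) (hL : L * Lᵀ = W + D) (hpos : (W + D).PosDef)
    (hLunit : IsUnit L)
    (f : (Fin d → ℝ) → ℝ) (gradf : (Fin d → ℝ) → Fin d → ℝ)
    (st sstar Z : Fin d → ℝ) (hst : st ∈ S) (hsstar : sstar ∈ S)
    (zm zv : Fin d → ℝ) (hzm : zm = Lᵀ *ᵥ st + Z) (hzv : zv = st + (Lᵀ)⁻¹ *ᵥ Z)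
    (Em Ev : (Fin d → ℝ) → (Fin d → ℝ) → ℝ)
    (hEm : ∀ cur s, Em cur s =
      -(1 / 2) * (s ⬝ᵥ (D *ᵥ s)) + (gradf cur - W *ᵥ cur + L *ᵥ zm) ⬝ᵥ s)
    (hEv : ∀ cur s, Ev cur s =
      -(1 / 2) * (s ⬝ᵥ (D *ᵥ s)) + (gradf cur - W *ᵥ cur + (W + D) *ᵥ zv) ⬝ᵥ s) :
    (∀ s, Em st s = Ev st s) ∧ (∀ s, Em sstar s = Ev sstar s) ∧
    (Real.exp (f sstar - f st) *
        (Real.exp (-(1 / 2) * ((zm - Lᵀ *ᵥ sstar) ⬝ᵥ (zm - Lᵀ *ᵥ sstar))) *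
          (Real.exp (Em sstar st) / ∑ s ∈ S, Real.exp (Em sstar s))) /
        (Real.exp (-(1 / 2) * ((zm - Lᵀ *ᵥ st) ⬝ᵥ (zm - Lᵀ *ᵥ st))) *
          (Real.exp (Em st sstar) / ∑ s ∈ S, Real.exp (Em st s)))
      = Real.exp (f sstar - f st) *
        (Real.exp (-(1 / 2) * ((zv - sstar) ⬝ᵥ ((W + D) *ᵥ (zv - sstar)))) *
          (Real.exp (Ev sstar st) / ∑ s ∈ S, Real.exp (Ev sstar s))) /
        (Real.exp (-(1 / 2) * ((zv - st) ⬝ᵥ ((W + D) *ᵥ (zv - st)))) *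
          (Real.exp (Ev st sstar) / ∑ s ∈ S, Real.exp (Ev st s)))) := by
  have hdet : IsUnit Lᵀ.det := by
    rw [Matrix.det_transpose]
    exact (Matrix.isUnit_iff_isUnit_det L).mp hLunit
  have hZm : Lᵀ *ᵥ zv = zm := by
    rw [hzv, hzm, Matrix.mulVec_add, Matrix.mulVec_mulVec,
      Matrix.mul_nonsing_inv _ hdet, Matrix.one_mulVec]
  have hLz : L *ᵥ zm = (W + D) *ᵥ zv := by
    rw [← hZm, Matrix.mulVec_mulVec, hL]
  have hE : ∀ cur s, Em cur s = Ev cur s := by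
    intro cur s
    rw [hEm, hEv, hLz]
  have hquad : ∀ s, (zm - Lᵀ *ᵥ s) ⬝ᵥ (zm - Lᵀ *ᵥ s)
      = (zv - s) ⬝ᵥ ((W + D) *ᵥ (zv - s)) := by
    intro s
    rw [← hZm, ← Matrix.mulVec_sub, ← hL, ← Matrix.mulVec_mulVec,
      Matrix.dotProduct_mulVec (zv - s) L, ← Matrix.mulVec_transpose]
  refine ⟨fun s => hE st s, fun s => hE sstar s, ?_⟩
  simp only [hE, hquad]
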